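/- arXiv:1911.01781 — 3 statements merged into one kernel-verified Lean document; each statement's English description precedes it below -/
import Mathlib

section
/- Let Ω ⊆ ℝ^N be open and connected, p > 1, and let u, v : Ω → ℝ be differentiable functions with u(z) ≥ 0 and v(z) > 0 for all z ∈ Ω, such that z ↦ u(z)^p / v(z)^{p−1} is differentiable on Ω. Define R(u,v)(z) = ‖∇u(z)‖^p − ‖∇v(z)‖^{p−2} ⟨∇v(z), ∇(u^p / v^{p−1})(z)⟩. Then R(u,v)(z) = 0 for all z ∈ Ω if and only if there exists ξ ≥ 0 such that u(z) = ξ v(z) for all z ∈ Ω. -/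
open Real InnerProductSpace Metric
open scoped RealInnerProductSpace

private lemma rpow_norm_helper {r p : ℝ} (hr : 0 ≤ r) (hp : 1 < p) :
    r ^ (p - 2) * (r * r) = r ^ p := by
  rcases hr.eq_or_lt with h | h
  · rw [← h]; simp [Real.zero_rpow (by positivity : p ≠ (0:ℝ))]
  · have : r * r = r ^ (2:ℝ) := by
      rw [show (2:ℝ) = ((2:ℕ):ℝ) by norm_num, Real.rpow_natCast]; ring
    rw [this, ← Real.rpow_add h]; ring_nf
private lemma young_ineq {p A B : ℝ} (hp : 1 < p) (hA : 0 ≤ A) (hB : 0 ≤ B) :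
    0 ≤ A ^ p + (p - 1) * B ^ p - p * B ^ (p - 1) * A ∧
      (A ^ p + (p - 1) * B ^ p - p * B ^ (p - 1) * A = 0 → A = B) := by
  have hp0 : (0:ℝ) < p := by linarith
  rcases hB.eq_or_lt with h | hB'
  · subst h
    rw [Real.zero_rpow hp0.ne', Real.zero_rpow (by linarith : p - 1 ≠ 0)]
    constructor
    · have := Real.rpow_nonneg hA p; linarith [this]
    · intro h0
      have : A ^ p = 0 := by linarith
      exact (Real.rpow_eq_zero hA hp0.ne').mp this
  · set s := A / B with hs
    have hsnn : 0 ≤ s := div_nonneg hA hB'.le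
    have hAB : A = s * B := by rw [hs]; exact (div_mul_cancel₀ A hB'.ne').symm
    have hBp : 0 < B ^ p := Real.rpow_pos_of_pos hB' p
    have hexp : A ^ p + (p - 1) * B ^ p - p * B ^ (p - 1) * A
        = B ^ p * (s ^ p + (p - 1) - p * s) := by
      rw [hAB, Real.mul_rpow hsnn hB'.le]
      have h1 : B ^ (p-1) * B = B ^ p := by
        rw [← Real.rpow_add_one hB'.ne']; ring_nf
      calc s ^ p * B ^ p + (p - 1) * B ^ p - p * B ^ (p - 1) * (s * B)
          = s ^ p * B ^ p + (p - 1) * B ^ p - p * s * (B ^ (p-1) * B) := by ring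
        _ = B ^ p * (s ^ p + (p - 1) - p * s) := by rw [h1]; ring
    have hbern : 1 + p * (s - 1) ≤ s ^ p := by
      have := one_add_mul_self_le_rpow_one_add (by linarith : (-1:ℝ) ≤ s - 1) hp.le
      simpa using this
    constructor
    · rw [hexp]
      apply mul_nonneg hBp.le; nlinarith
    · intro h0
      rw [hexp, mul_eq_zero] at h0
      rcases h0 with h0 | h0
      · exact absurd h0 hBp.ne'
      by_contra hne
      have hs1 : s ≠ 1 := by
        intro h; apply hne; rw [hAB, h, one_mul]
      have := one_add_mul_self_lt_rpow_one_add (by linarith : (-1:ℝ) ≤ s - 1)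
        (by simpa [sub_eq_zero] using hs1) hp
      simp only [add_sub_cancel] at this
      nlinarith

private lemma picone_pointwise {F : Type*} [NormedAddCommGroup F] [InnerProductSpace ℝ F]
    {p t : ℝ} (hp : 1 < p) (ht : 0 ≤ t) (a b : F) :
    0 ≤ ‖a‖ ^ p + (p - 1) * t ^ p * ‖b‖ ^ p - p * t ^ (p - 1) * (‖b‖ ^ (p - 2) * ⟪b, a⟫_ℝ) ∧
      (‖a‖ ^ p + (p - 1) * t ^ p * ‖b‖ ^ p - p * t ^ (p - 1) * (‖b‖ ^ (p - 2) * ⟪b, a⟫_ℝ) = 0 →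
        a = t • b) := by
  have hp0 : (0:ℝ) < p := by linarith
  by_cases hb : b = 0
  · subst hb
    simp only [inner_zero_left, norm_zero, Real.zero_rpow hp0.ne', mul_zero, add_zero, sub_zero,
      smul_zero]
    constructor
    · exact Real.rpow_nonneg (norm_nonneg a) p
    · intro h0
      have : ‖a‖ = 0 := (Real.rpow_eq_zero (norm_nonneg a) hp0.ne').mp h0
      simpa using this
  · have hbn : 0 < ‖b‖ := norm_pos_iff.mpr hb
    set A := ‖a‖ with hA
    set B := t * ‖b‖ with hB
    have hBnn : 0 ≤ B := mul_nonneg ht hbn.le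
    have hBp : B ^ p = t ^ p * ‖b‖ ^ p := Real.mul_rpow ht hbn.le
    have hBp1 : B ^ (p-1) = t ^ (p-1) * ‖b‖ ^ (p-1) := Real.mul_rpow ht hbn.le
    have hb1 : ‖b‖ ^ (p-2) * ‖b‖ = ‖b‖ ^ (p-1) := by
      rw [← Real.rpow_add_one hbn.ne']; ring_nf
    set C := p * t ^ (p - 1) * (‖b‖ ^ (p - 2) * (‖b‖ * A - ⟪b, a⟫_ℝ)) with hC
    have hCnn : 0 ≤ C := by
      apply mul_nonneg (mul_nonneg hp0.le (Real.rpow_nonneg ht _))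
      apply mul_nonneg (Real.rpow_nonneg hbn.le _)
      have := real_inner_le_norm b a
      linarith
    set Y := A ^ p + (p - 1) * B ^ p - p * B ^ (p - 1) * A with hY
    obtain ⟨hYnn, hYeq⟩ := young_ineq hp (norm_nonneg a) hBnn
    have hdecomp : ‖a‖ ^ p + (p - 1) * t ^ p * ‖b‖ ^ p
        - p * t ^ (p - 1) * (‖b‖ ^ (p - 2) * ⟪b, a⟫_ℝ) = Y + C := by
      rw [hY, hC, hBp, hBp1, ← hA]
      have : ‖b‖ ^ (p-2) * ‖b‖ * A = ‖b‖ ^ (p-1) * A := by rw [hb1]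
      linear_combination (-(p * t ^ (p-1))) * this
    rw [hdecomp]
    refine ⟨by linarith, fun h0 => ?_⟩
    have hY0 : Y = 0 := by linarith
    have hC0 : C = 0 := by linarith
    have hAB : A = B := hYeq hY0
    rcases ht.eq_or_lt with ht0 | ht0
    · have hA0 : ‖a‖ = 0 := by rw [← hA, hAB, hB, ← ht0]; ring
      rw [← ht0, zero_smul]
      simpa using hA0
    · -- t > 0 : C = 0 forces inner equality
      have hfac : ‖b‖ * A - ⟪b, a⟫_ℝ = 0 := by
        have h1 : p * t ^ (p-1) > 0 := mul_pos hp0 (Real.rpow_pos_of_pos ht0 _)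
        have h2 : (0:ℝ) < ‖b‖ ^ (p-2) := Real.rpow_pos_of_pos hbn _
        rw [hC] at hC0
        rcases mul_eq_zero.mp hC0 with h | h
        · exact absurd h h1.ne'
        rcases mul_eq_zero.mp h with h | h
        · exact absurd h h2.ne'
        · exact h
      have hinner : ⟪b, a⟫_ℝ = ‖b‖ * ‖a‖ := by rw [← hA]; linarith
      have := inner_eq_norm_mul_iff_real.mp hinner
      -- this : ‖a‖ • b = ‖b‖ • a
      have ha' : a = (‖a‖ / ‖b‖) • b := by
        have h2 : (‖a‖ / ‖b‖) • b = a := by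
          rw [div_eq_inv_mul, ← smul_smul, this, smul_smul, inv_mul_cancel₀ hbn.ne', one_smul]
        exact h2.symm
      rw [ha']
      congr 1
      rw [hA] at hAB
      rw [hAB, hB]
      field_simp

private lemma const_of_fderiv_zero {E : Type*} [NormedAddCommGroup E] [NormedSpace ℝ E]
    {Ω : Set E} (hΩ : IsOpen Ω) (hconn : IsPreconnected Ω) {g : E → ℝ}
    (hg : ∀ z ∈ Ω, HasFDerivAt g (0 : E →L[ℝ] ℝ) z) {x y : E} (hx : x ∈ Ω) (hy : y ∈ Ω) : g x = g y := by
  -- local constancy around each point of Ω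
  have hloc : ∀ z ∈ Ω, ∃ ε > 0, ball z ε ⊆ Ω ∧ ∀ w ∈ ball z ε, g w = g z := by
    intro z hz
    obtain ⟨ε, hε, hball⟩ := Metric.isOpen_iff.mp hΩ z hz
    refine ⟨ε, hε, hball, fun w hw => ?_⟩
    have hdiff : DifferentiableOn ℝ g (ball z ε) := fun w hw =>
      ((hg w (hball hw)).differentiableAt).differentiableWithinAt
    refine (convex_ball z ε).is_const_of_fderivWithin_eq_zero hdiff (fun w hw => ?_) hw
      (mem_ball_self hε)
    rw [fderivWithin_eq_fderiv (isOpen_ball.uniqueDiffWithinAt hw)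
      ((hg w (hball hw)).differentiableAt)]
    exact (hg w (hball hw)).fderiv
  set U : Set E := {z | z ∈ Ω ∧ g z = g x} with hU
  set V : Set E := {z | z ∈ Ω ∧ g z ≠ g x} with hV
  have hUopen : IsOpen U := by
    rw [Metric.isOpen_iff]
    rintro z ⟨hzΩ, hzg⟩
    obtain ⟨ε, hε, hball, hconst⟩ := hloc z hzΩ
    exact ⟨ε, hε, fun w hw => ⟨hball hw, (hconst w hw).trans hzg⟩⟩
  have hVopen : IsOpen V := by
    rw [Metric.isOpen_iff]
    rintro z ⟨hzΩ, hzg⟩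
    obtain ⟨ε, hε, hball, hconst⟩ := hloc z hzΩ
    exact ⟨ε, hε, fun w hw => ⟨hball hw, by rw [hconst w hw]; exact hzg⟩⟩
  by_contra hne
  obtain ⟨z, hzΩ, ⟨_, hz1⟩, _, hz2⟩ :=
    hconn U V hUopen hVopen
      (fun z hz => by by_cases h : g z = g x
                      exacts [Or.inl ⟨hz, h⟩, Or.inr ⟨hz, h⟩])
      ⟨x, hx, hx, rfl⟩ ⟨y, hy, hy, fun h => hne (h.symm ▸ rfl)⟩
  exact hz2 hz1

private lemma grad_w {F : Type*} [NormedAddCommGroup F] [InnerProductSpace ℝ F] [CompleteSpace F]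
    {p : ℝ} (hp : 1 < p) {u v : F → ℝ} {z : F} (hu : DifferentiableAt ℝ u z)
    (hv : DifferentiableAt ℝ v z) (hv0 : 0 < v z) :
    HasGradientAt (fun y => u y ^ p / v y ^ (p - 1))
      ((p * u z ^ (p - 1) / v z ^ (p - 1)) • gradient u z
        + (-((p - 1) * u z ^ p / v z ^ p)) • gradient v z) z := by
  have hGu : HasFDerivAt u (toDual ℝ F (gradient u z)) z :=
    hasGradientAt_iff_hasFDerivAt.mp hu.hasGradientAt
  have hGv : HasFDerivAt v (toDual ℝ F (gradient v z)) z :=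
    hasGradientAt_iff_hasFDerivAt.mp hv.hasGradientAt
  have h1 : HasFDerivAt (fun y => u y ^ p)
      ((p * u z ^ (p - 1)) • toDual ℝ F (gradient u z)) z :=
    (Real.hasDerivAt_rpow_const (Or.inr hp.le)).comp_hasFDerivAt z hGu
  have h2a : HasFDerivAt (fun y => v y ^ (p - 1))
      (((p - 1) * v z ^ (p - 1 - 1)) • toDual ℝ F (gradient v z)) z :=
    (Real.hasDerivAt_rpow_const (Or.inl hv0.ne')).comp_hasFDerivAt z hGv
  have hvp1 : (0:ℝ) < v z ^ (p - 1) := Real.rpow_pos_of_pos hv0 _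
  have h2 : HasFDerivAt (fun y => (v y ^ (p - 1))⁻¹)
      ((-((v z ^ (p - 1)) ^ 2)⁻¹) • (((p - 1) * v z ^ (p - 1 - 1)) • toDual ℝ F (gradient v z))) z :=
    (hasDerivAt_inv hvp1.ne').comp_hasFDerivAt z h2a
  have hmul := h1.mul h2
  have hfun : (fun y => u y ^ p * (v y ^ (p - 1))⁻¹) = fun y => u y ^ p / v y ^ (p - 1) := by
    funext y; rw [div_eq_mul_inv]
  simp only [Pi.mul_def] at hmul; rw [hfun] at hmul
  rw [hasGradientAt_iff_hasFDerivAt]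
  refine hmul.congr_fderiv (Eq.symm ?_)
  rw [map_add, map_smul, map_smul, smul_smul, smul_smul, smul_smul]
  have s1 : (v z ^ (p - 1))⁻¹ * (p * u z ^ (p - 1)) = p * u z ^ (p - 1) / v z ^ (p - 1) := by
    rw [inv_mul_eq_div]
  have s2 : u z ^ p * -((v z ^ (p - 1)) ^ 2)⁻¹ * ((p - 1) * v z ^ (p - 1 - 1))
      = -((p - 1) * u z ^ p / v z ^ p) := by
    have hkey : v z ^ (p - 1) * v z ^ (p - 1) = v z ^ (p - 1 - 1) * v z ^ p := by
      rw [← Real.rpow_add hv0, ← Real.rpow_add hv0]; ring_nf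
    have hvp : (0:ℝ) < v z ^ p := Real.rpow_pos_of_pos hv0 _
    have hvp2 : (0:ℝ) < v z ^ (p - 1 - 1) := Real.rpow_pos_of_pos hv0 _
    rw [sq, hkey]
    field_simp
  rw [s1, s2, add_comm]

open Set

/-- Equality case in the nonlinear Picone identity on a connected open set `Ω`:
`R(u,v) ≡ 0` on `Ω` iff `u = ξ v` on `Ω` for some `ξ ≥ 0`. -/
theorem picone_eq_iff {N : ℕ} (Ω : Set (EuclideanSpace ℝ (Fin N))) (hΩ : IsOpen Ω)
    (hconn : IsConnected Ω)
    (p : ℝ) (hp : 1 < p)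
    (u v : EuclideanSpace ℝ (Fin N) → ℝ)
    (hu : ∀ z ∈ Ω, DifferentiableAt ℝ u z)
    (hv : ∀ z ∈ Ω, DifferentiableAt ℝ v z)
    (hunn : ∀ z ∈ Ω, 0 ≤ u z)
    (hvpos : ∀ z ∈ Ω, 0 < v z)
    (hw : ∀ z ∈ Ω, DifferentiableAt ℝ (fun z => u z ^ p / v z ^ (p - 1)) z) :
    (∀ z ∈ Ω,
      ‖gradient u z‖ ^ p -
        ‖gradient v z‖ ^ (p - 2) *
          (inner ℝ (gradient v z) (gradient (fun z => u z ^ p / v z ^ (p - 1)) z) : ℝ) = 0)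
    ↔ ∃ ξ : ℝ, 0 ≤ ξ ∧ ∀ z ∈ Ω, u z = ξ * v z := by
  constructor
  · intro hR
    obtain ⟨z₀, hz₀⟩ := hconn.nonempty
    refine ⟨u z₀ / v z₀, div_nonneg (hunn z₀ hz₀) (hvpos z₀ hz₀).le, ?_⟩
    -- Step 1: at each point, `∇u = (u/v) • ∇v`.
    have hgradrel : ∀ z ∈ Ω, gradient u z = (u z / v z) • gradient v z := by
      intro z hz
      set a := gradient u z with ha
      set b := gradient v z with hb
      set t := u z / v z with htdef
      have ht : 0 ≤ t := div_nonneg (hunn z hz) (hvpos z hz).le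
      have hgw : gradient (fun y => u y ^ p / v y ^ (p - 1)) z
          = (p * u z ^ (p - 1) / v z ^ (p - 1)) • a + (-((p - 1) * u z ^ p / v z ^ p)) • b :=
        (grad_w hp (hu z hz) (hv z hz) (hvpos z hz)).gradient
      have hRz := hR z hz
      rw [hgw] at hRz
      have hc1 : p * u z ^ (p - 1) / v z ^ (p - 1) = p * t ^ (p - 1) := by
        rw [htdef, Real.div_rpow (hunn z hz) (hvpos z hz).le]; ring
      have hc2 : (p - 1) * u z ^ p / v z ^ p = (p - 1) * t ^ p := by
        rw [htdef, Real.div_rpow (hunn z hz) (hvpos z hz).le]; ring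
      rw [hc1, hc2] at hRz
      have hexp : ⟪b, (p * t ^ (p - 1)) • a + (-((p - 1) * t ^ p)) • b⟫_ℝ
          = p * t ^ (p - 1) * ⟪b, a⟫_ℝ - (p - 1) * t ^ p * (‖b‖ * ‖b‖) := by
        rw [inner_add_right, real_inner_smul_right, real_inner_smul_right,
          real_inner_self_eq_norm_mul_norm]; ring
      rw [hexp] at hRz
      have hnorm : ‖b‖ ^ (p - 2) * (‖b‖ * ‖b‖) = ‖b‖ ^ p :=
        rpow_norm_helper (norm_nonneg b) hp
      have hKz : ‖a‖ ^ p + (p - 1) * t ^ p * ‖b‖ ^ p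
          - p * t ^ (p - 1) * (‖b‖ ^ (p - 2) * ⟪b, a⟫_ℝ) = 0 := by
        rw [← hnorm]; linear_combination hRz
      exact (picone_pointwise hp ht a b).2 hKz
    -- Step 2: `u / v` has vanishing derivative on Ω.
    have hgz : ∀ z ∈ Ω, HasFDerivAt (fun y => u y / v y)
        (0 : EuclideanSpace ℝ (Fin N) →L[ℝ] ℝ) z := by
      intro z hz
      have hGu : HasFDerivAt u (toDual ℝ _ (gradient u z)) z :=
        hasGradientAt_iff_hasFDerivAt.mp (hu z hz).hasGradientAt
      have hGv : HasFDerivAt v (toDual ℝ _ (gradient v z)) z :=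
        hasGradientAt_iff_hasFDerivAt.mp (hv z hz).hasGradientAt
      have hinv : HasFDerivAt (fun y => (v y)⁻¹)
          ((-((v z) ^ 2)⁻¹) • toDual ℝ _ (gradient v z)) z :=
        (hasDerivAt_inv (hvpos z hz).ne').comp_hasFDerivAt z hGv
      have hmul := hGu.mul hinv
      have hfn : (fun y => u y * (v y)⁻¹) = fun y => u y / v y := by
        funext y; rw [div_eq_mul_inv]
      simp only [Pi.mul_def] at hmul; rw [hfn] at hmul
      refine hmul.congr_fderiv (Eq.symm ?_)
      rw [hgradrel z hz, map_smul, smul_smul, smul_smul, ← add_smul]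
      have h0 : u z * -((v z) ^ 2)⁻¹ + (v z)⁻¹ * (u z / v z) = 0 := by
        rw [sq]; field_simp; ring
      rw [h0, zero_smul]
    -- Step 3: conclude by connectedness.
    intro z hz
    have hconst : u z / v z = u z₀ / v z₀ :=
      const_of_fderiv_zero hΩ hconn.isPreconnected hgz hz hz₀
    exact (div_eq_iff (hvpos z hz).ne').mp hconst
  · rintro ⟨ξ, hξ, hEq⟩ z hz
    have hv0 := hvpos z hz
    set b := gradient v z with hb
    have hGv : HasFDerivAt v (toDual ℝ _ b) z :=
      hasGradientAt_iff_hasFDerivAt.mp (hv z hz).hasGradientAt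
    have hgu : gradient u z = ξ • b := by
      have hEqu : u =ᶠ[nhds z] fun y => ξ * v y :=
        Filter.eventuallyEq_of_mem (hΩ.mem_nhds hz) fun y hy => hEq y hy
      rw [hEqu.gradient_eq]
      refine HasGradientAt.gradient ?_
      rw [hasGradientAt_iff_hasFDerivAt, map_smul]
      exact hGv.const_mul ξ
    have hgw : gradient (fun y => u y ^ p / v y ^ (p - 1)) z = ξ ^ p • b := by
      have hweq : (fun y => u y ^ p / v y ^ (p - 1)) =ᶠ[nhds z] fun y => ξ ^ p * v y := by
        refine Filter.eventuallyEq_of_mem (hΩ.mem_nhds hz) fun y hy => ?_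
        have hvy := hvpos y hy
        have h3 : (v y) ^ p = v y * (v y) ^ (p - 1) := by
          rw [show p = 1 + (p - 1) by ring, Real.rpow_add hvy, Real.rpow_one]
          ring_nf
        rw [hEq y hy, Real.mul_rpow hξ hvy.le, h3]
        field_simp [(Real.rpow_pos_of_pos hvy (p - 1)).ne']
      rw [hweq.gradient_eq]
      refine HasGradientAt.gradient ?_
      rw [hasGradientAt_iff_hasFDerivAt, map_smul]
      exact hGv.const_mul (ξ ^ p)
    rw [hgu, hgw, real_inner_smul_right, real_inner_self_eq_norm_mul_norm,
      norm_smul, Real.norm_eq_abs, abs_of_nonneg hξ, Real.mul_rpow hξ (norm_nonneg b)]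
    have hnorm : ‖b‖ ^ (p - 2) * (‖b‖ * ‖b‖) = ‖b‖ ^ p :=
      rpow_norm_helper (norm_nonneg b) hp
    linear_combination (-(ξ ^ p)) * hnorm
end

section
/- Let (Ω, μ) be a measure space, 1 < p < ∞, η ∈ ℝ, and let g, f : Ω × ℝ → ℝ satisfy: for every ρ > 0 there exists C_ρ > 0 such that |g(z,x)| + |f(z,x)| ≤ C_ρ for μ-a.e. z and all |x| ≤ ρ; for every ε > 0 there exists δ > 0 such that |g(z,x)| ≤ ε |x|^{p−1} for μ-a.e. z and all 0 < |x| ≤ δ; there exists q ∈ (1,p) such that for every ε > 0 there exists M > 0 with |g(z,x)| ≤ ε |x|^{q−1} for μ-a.e. z and all |x| ≥ M; for every ε > 0 there exists M > 0 with |f(z,x) − η|x|^{p−2}x| ≤ ε |x|^{p−1} for μ-a.e. z and all |x| ≥ M; and there exists ϑ ∈ L^∞(μ) such that for every ε > 0 there exists δ > 0 with f(z,x)·x ≤ (ϑ(z) + ε)|x|^p for μ-a.e. z and all |x| ≤ δ. Then for every λ > 0, every ε > 0 and every r > p there exists c₅ > 0 such that (λ g(z,x) + f(z,x))·x ≤ (ϑ(z)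 + (1+λ)ε) |x|^p + c₅ |x|^r for μ-a.e. z ∈ Ω and all x ∈ ℝ. -/
open MeasureTheory
open scoped ENNReal

set_option maxHeartbeats 1000000 in
/-- Unilateral growth restriction (6) of the paper: under the quantitative forms of
hypotheses H(g)(i)–(ii) and H(f)(i)–(iii), for every `λ > 0`, `ε > 0` and `r > p` there is
`c₅ > 0` with `(λ g(z,x) + f(z,x)) x ≤ (ϑ(z) + (1+λ)ε)|x|^p + c₅|x|^r` for a.e. `z`, all `x`. -/
theorem unilateral_growth_restriction {Ω : Type*} [MeasurableSpace Ω] (μ : Measure Ω)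
    (p : ℝ) (hp : 1 < p) (η : ℝ) (g f : Ω → ℝ → ℝ)
    (hbdd : ∀ ρ : ℝ, 0 < ρ → ∃ C : ℝ, 0 < C ∧
      ∀ᵐ z ∂μ, ∀ x : ℝ, |x| ≤ ρ → |g z x| + |f z x| ≤ C)
    (hg0 : ∀ ε : ℝ, 0 < ε → ∃ δ : ℝ, 0 < δ ∧
      ∀ᵐ z ∂μ, ∀ x : ℝ, 0 < |x| → |x| ≤ δ → |g z x| ≤ ε * |x| ^ (p - 1))
    (hginf : ∃ q : ℝ, 1 < q ∧ q < p ∧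
      ∀ ε : ℝ, 0 < ε → ∃ M : ℝ, 0 < M ∧
        ∀ᵐ z ∂μ, ∀ x : ℝ, M ≤ |x| → |g z x| ≤ ε * |x| ^ (q - 1))
    (hfinf : ∀ ε : ℝ, 0 < ε → ∃ M : ℝ, 0 < M ∧
      ∀ᵐ z ∂μ, ∀ x : ℝ, M ≤ |x| →
        |f z x - η * (|x| ^ (p - 2) * x)| ≤ ε * |x| ^ (p - 1))
    (ϑ : Ω → ℝ) (hϑ : MemLp ϑ ⊤ μ)
    (hf0 : ∀ ε : ℝ, 0 < ε → ∃ δ : ℝ, 0 < δ ∧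
      ∀ᵐ z ∂μ, ∀ x : ℝ, |x| ≤ δ → f z x * x ≤ (ϑ z + ε) * |x| ^ p) :
    ∀ lam : ℝ, 0 < lam → ∀ ε : ℝ, 0 < ε → ∀ r : ℝ, p < r →
      ∃ c₅ : ℝ, 0 < c₅ ∧
        ∀ᵐ z ∂μ, ∀ x : ℝ,
          (lam * g z x + f z x) * x ≤ (ϑ z + (1 + lam) * ε) * |x| ^ p + c₅ * |x| ^ r := by
  intro lam hlam ε hε r hpr
  obtain ⟨q, hq1, hqp, hginf'⟩ := hginf
  obtain ⟨δ₁, hδ₁, hgδ⟩ := hg0 ε hε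
  obtain ⟨δ₂, hδ₂, hfδ⟩ := hf0 ε hε
  obtain ⟨M₂, hM₂, hfM⟩ := hfinf ε hε
  obtain ⟨M₁, hM₁, hgM⟩ := hginf' ε hε
  have hp0 : (0:ℝ) < p := by linarith
  have hr0 : (0:ℝ) < r := by linarith
  set δ : ℝ := min δ₁ (min δ₂ 1) with hδdef
  have hδ : 0 < δ := lt_min hδ₁ (lt_min hδ₂ one_pos)
  have hδ1 : δ ≤ 1 := le_trans (min_le_right _ _) (min_le_right _ _)
  have hδd1 : δ ≤ δ₁ := min_le_left _ _
  have hδd2 : δ ≤ δ₂ := le_trans (min_le_right _ _) (min_le_left _ _)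
  set M : ℝ := max M₁ (max M₂ 1) with hMdef
  have hM1 : (1:ℝ) ≤ M := le_trans (le_max_right _ _) (le_max_right _ _)
  have hM : 0 < M := lt_of_lt_of_le one_pos hM1
  have hMd1 : M₁ ≤ M := le_max_left _ _
  have hMd2 : M₂ ≤ M := le_trans (le_max_left _ _) (le_max_right _ _)
  clear_value δ M
  obtain ⟨C, hC, hCb⟩ := hbdd M hM
  -- essential sup bound on ϑ
  set K : ℝ := (eLpNorm ϑ ⊤ μ).toReal with hKdef
  have hKnn : 0 ≤ K := ENNReal.toReal_nonneg
  have hϑK : ∀ᵐ z ∂μ, |ϑ z| ≤ K := by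
    have htop : eLpNorm ϑ ⊤ μ < ⊤ := hϑ.2
    filter_upwards [ae_le_eLpNormEssSup (f := ϑ) (μ := μ)] with z hz
    have : (‖ϑ z‖₊ : ℝ≥0∞) ≤ eLpNorm ϑ ⊤ μ := by
      rwa [eLpNorm_exponent_top]
    have h2 : ((‖ϑ z‖₊ : ℝ≥0∞)).toReal ≤ K := by
      exact ENNReal.toReal_mono htop.ne this
    simpa [Real.norm_eq_abs] using h2
  set c₅ : ℝ := max (((1+lam)*C*M + K*M^p)/δ^r + 1) (|η| + K + 1) with hc₅def
  have hδr : (0:ℝ) < δ ^ r := Real.rpow_pos_of_pos hδ r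
  have hc₅pos : 0 < c₅ := by
    have h1 : 0 ≤ ((1+lam)*C*M + K*M^p)/δ^r := by
      apply div_nonneg _ hδr.le
      have : 0 ≤ K * M ^ p := mul_nonneg hKnn (Real.rpow_pos_of_pos hM p).le
      nlinarith [mul_pos (mul_pos (by linarith : (0:ℝ) < 1 + lam) hC) hM]
    have : (0:ℝ) < ((1+lam)*C*M + K*M^p)/δ^r + 1 := by linarith
    exact lt_max_of_lt_left this
  have hc₅1 : ((1+lam)*C*M + K*M^p)/δ^r + 1 ≤ c₅ := le_max_left _ _
  have hc₅2 : |η| + K + 1 ≤ c₅ := le_max_right _ _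
  clear_value K c₅
  refine ⟨c₅, hc₅pos, ?_⟩
  filter_upwards [hgδ, hfδ, hgM, hfM, hCb, hϑK] with z h1 h2 h3 h4 h5 h6
  intro x
  have hϑlb : -K ≤ ϑ z := neg_le_of_abs_le h6
  rcases eq_or_ne x 0 with rfl | hx0
  · simp [Real.zero_rpow hp0.ne', Real.zero_rpow hr0.ne']
  have hxpos : 0 < |x| := abs_pos.2 hx0
  have hxp : (0:ℝ) < |x| ^ p := Real.rpow_pos_of_pos hxpos p
  have hxr : (0:ℝ) < |x| ^ r := Real.rpow_pos_of_pos hxpos r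
  have hxx : x * x = |x| * |x| := by rw [← abs_mul_abs_self]
  have hmul1 : |x| ^ (p-1) * |x| = |x| ^ p := by
    rw [← Real.rpow_add_one hxpos.ne' (p-1)]; ring_nf
  rcases le_total (|x|) δ with hsmall | hnotsmall
  · -- small region
    have hgb := h1 x hxpos (le_trans hsmall hδd1)
    have hfb := h2 x (le_trans hsmall hδd2)
    have hgx : lam * g z x * x ≤ lam * ε * |x| ^ p := by
      calc lam * g z x * x ≤ |lam * g z x * x| := le_abs_self _
        _ = lam * |g z x| * |x| := by
            rw [abs_mul, abs_mul, abs_of_pos hlam]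
        _ ≤ lam * (ε * |x| ^ (p-1)) * |x| := by
            apply mul_le_mul_of_nonneg_right _ hxpos.le
            exact mul_le_mul_of_nonneg_left hgb hlam.le
        _ = lam * ε * (|x| ^ (p-1) * |x|) := by ring
        _ = lam * ε * |x| ^ p := by rw [hmul1]
    have : (lam * g z x + f z x) * x ≤ (ϑ z + (1 + lam) * ε) * |x| ^ p := by
      have : (lam * g z x + f z x) * x = lam * g z x * x + f z x * x := by ring
      rw [this]
      calc lam * g z x * x + f z x * x ≤ lam * ε * |x| ^ p + (ϑ z + ε) * |x| ^ p :=
            add_le_add hgx hfb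
        _ = (ϑ z + (1 + lam) * ε) * |x| ^ p := by ring
    calc (lam * g z x + f z x) * x ≤ (ϑ z + (1 + lam) * ε) * |x| ^ p := this
      _ ≤ (ϑ z + (1 + lam) * ε) * |x| ^ p + c₅ * |x| ^ r := by nlinarith
  rcases le_total (|x|) M with hmid | hbig
  · -- middle region
    have hCbx := h5 x hmid
    have hgabs : 0 ≤ |g z x| := abs_nonneg _
    have hfabs : 0 ≤ |f z x| := abs_nonneg _
    have hLHS : (lam * g z x + f z x) * x ≤ (1 + lam) * C * M := by
      calc (lam * g z x + f z x) * x ≤ |(lam * g z x + f z x) * x| := le_abs_self _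
        _ = |lam * g z x + f z x| * |x| := abs_mul _ _
        _ ≤ (lam * |g z x| + |f z x|) * |x| := by
            apply mul_le_mul_of_nonneg_right _ (abs_nonneg x)
            calc |lam * g z x + f z x| ≤ |lam * g z x| + |f z x| := abs_add_le _ _
              _ = lam * |g z x| + |f z x| := by rw [abs_mul, abs_of_pos hlam]
        _ ≤ ((1 + lam) * C) * M := by
            refine mul_le_mul ?_ hmid (abs_nonneg x) (by nlinarith [mul_pos hlam hC])
            have h1g : lam * |g z x| + lam * |f z x| ≤ lam * C := by
              calc lam * |g z x| + lam * |f z x| = lam * (|g z x| + |f z x|) := by ring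
                _ ≤ lam * C := mul_le_mul_of_nonneg_left hCbx hlam.le
            have h2g : 0 ≤ lam * |f z x| := mul_nonneg hlam.le hfabs
            have h3g : (1 + lam) * C = C + lam * C := by ring
            linarith
        _ = (1 + lam) * C * M := by ring
    have hxpM : |x| ^ p ≤ M ^ p :=
      Real.rpow_le_rpow (abs_nonneg x) hmid hp0.le
    have hrlb : δ ^ r ≤ |x| ^ r :=
      Real.rpow_le_rpow hδ.le hnotsmall hr0.le
    have hRHS : -(K * M ^ p) + c₅ * δ ^ r ≤ (ϑ z + (1 + lam) * ε) * |x| ^ p + c₅ * |x| ^ r := by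
      have h1' : -(K * M ^ p) ≤ (ϑ z + (1 + lam) * ε) * |x| ^ p := by
        have hco : -K ≤ ϑ z + (1 + lam) * ε := by nlinarith
        have hMp : (0:ℝ) < M ^ p := Real.rpow_pos_of_pos hM p
        rcases le_or_gt 0 (ϑ z + (1 + lam) * ε) with h | h
        · nlinarith
        · nlinarith
      have h2' : c₅ * δ ^ r ≤ c₅ * |x| ^ r :=
        mul_le_mul_of_nonneg_left hrlb hc₅pos.le
      linarith
    have hc₅1' : ((1+lam)*C*M + K*M^p)/δ^r ≤ c₅ := by linarith
    have : (1+lam)*C*M + K*M^p ≤ c₅ * δ ^ r := by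
      rw [div_le_iff₀ hδr] at hc₅1'; linarith
    linarith
  · -- big region
    have hgb := h3 x (le_trans hMd1 hbig)
    have hfb := h4 x (le_trans hMd2 hbig)
    have hx1 : (1:ℝ) ≤ |x| := le_trans hM1 hbig
    -- g term
    have hxq : |x| ^ (q-1) * |x| = |x| ^ q := by
      rw [← Real.rpow_add_one hxpos.ne' (q-1)]; ring_nf
    have hqlep : |x| ^ q ≤ |x| ^ p :=
      Real.rpow_le_rpow_of_exponent_le hx1 hqp.le
    have hgx : lam * g z x * x ≤ lam * ε * |x| ^ p := by
      calc lam * g z x * x ≤ |lam * g z x * x| := le_abs_self _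
        _ = lam * |g z x| * |x| := by rw [abs_mul, abs_mul, abs_of_pos hlam]
        _ ≤ lam * (ε * |x| ^ (q-1)) * |x| := by
            apply mul_le_mul_of_nonneg_right _ hxpos.le
            exact mul_le_mul_of_nonneg_left hgb hlam.le
        _ = lam * ε * (|x| ^ (q-1) * |x|) := by ring
        _ = lam * ε * |x| ^ q := by rw [hxq]
        _ ≤ lam * ε * |x| ^ p := by
            apply mul_le_mul_of_nonneg_left hqlep (by positivity)
    -- f term
    have hp2 : |x| ^ (p-2) * (x * x) = |x| ^ p := by
      rw [hxx, ← mul_assoc, ← Real.rpow_add_one hxpos.ne' (p-2),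
        ← Real.rpow_add_one hxpos.ne' (p-2+1)]
      ring_nf
    have hfx : f z x * x ≤ (η + ε) * |x| ^ p := by
      have key : (f z x - η * (|x| ^ (p-2) * x)) * x ≤ ε * |x| ^ p := by
        calc (f z x - η * (|x| ^ (p-2) * x)) * x
            ≤ |(f z x - η * (|x| ^ (p-2) * x)) * x| := le_abs_self _
          _ = |f z x - η * (|x| ^ (p-2) * x)| * |x| := abs_mul _ _
          _ ≤ (ε * |x| ^ (p-1)) * |x| := mul_le_mul_of_nonneg_right hfb hxpos.le
          _ = ε * (|x| ^ (p-1) * |x|) := by ring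
          _ = ε * |x| ^ p := by rw [hmul1]
      have expand : f z x * x = (f z x - η * (|x| ^ (p-2) * x)) * x + η * (|x| ^ (p-2) * (x * x)) := by
        ring
      rw [expand, hp2]
      linarith
    -- combine
    have hrp : |x| ^ p ≤ |x| ^ r :=
      Real.rpow_le_rpow_of_exponent_le hx1 hpr.le
    have hc₅2' : |η| + K ≤ c₅ := by linarith
    have hηϑ : η - ϑ z ≤ |η| + K := by
      have := le_abs_self η
      linarith
    have hkey : (η - ϑ z) * |x| ^ p ≤ c₅ * |x| ^ r := by
      calc (η - ϑ z) * |x| ^ p ≤ (|η| + K) * |x| ^ p :=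
            mul_le_mul_of_nonneg_right hηϑ hxp.le
        _ ≤ c₅ * |x| ^ p := mul_le_mul_of_nonneg_right hc₅2' hxp.le
        _ ≤ c₅ * |x| ^ r := mul_le_mul_of_nonneg_left hrp hc₅pos.le
    have expand2 : (lam * g z x + f z x) * x = lam * g z x * x + f z x * x := by ring
    rw [expand2]
    nlinarith
end

section
/- Let (Ω, μ) be a finite measure space, 1 < p < ∞, p' = p/(p−1), η ∈ ℝ and c > 0. Let f : ℝ → ℝ be continuous with |f(x)| ≤ c (1 + |x|^{p−1}) for all x ∈ ℝ and lim_{x→+∞} f(x)/x^{p−1} = η = lim_{x→−∞} f(x)/(|x|^{p−2}x). Let (uₙ) be measurable real-valued functions on Ω, (tₙ) positive reals with tₙ → +∞, and suppose there exist a measurable function y and w ∈ L^p(μ) such that uₙ(z)/tₙ → y(z) for μ-a.e. z ∈ Ω and |uₙ(z)/tₙ| ≤ w(z) for μ-a.e. z ∈ Ω and all n. Then ∫_Ω |f(uₙ(z))/tₙ^{p−1} − η |y(z)|^{p−2} y(z)|^{p'} dμ(z) → 0 as n → ∞, i.e. f(uₙ)/tₙ^{p−1} → η |y|^{p−2} y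 in L^{p'}(μ). -/
open MeasureTheory Filter

private lemma aux_mul_atTop {a g : ℕ → ℝ} {L : ℝ} (hL : 0 < L)
    (ha : Tendsto a atTop (nhds L)) (hg : Tendsto g atTop atTop) :
    Tendsto (fun n => a n * g n) atTop atTop := by
  have h1 : ∀ᶠ n in atTop, L / 2 ≤ a n := ha.eventually (eventually_ge_nhds (by linarith))
  have h2 : ∀ᶠ n in atTop, (0:ℝ) ≤ g n := hg.eventually_ge_atTop 0
  refine tendsto_atTop_mono' _ ?_ (hg.const_mul_atTop (by linarith : (0:ℝ) < L / 2))
  filter_upwards [h1, h2] with n h1 h2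
  exact mul_le_mul_of_nonneg_right h1 h2

private lemma aux_abs_rpow_mul {p : ℝ} (hp : 1 < p) (x : ℝ) :
    |x| ^ (p - 2) * |x| = |x| ^ (p - 1) := by
  rcases eq_or_ne x 0 with h | h
  · simp [h, Real.zero_rpow (by linarith : p - 1 ≠ 0)]
  · have := Real.rpow_add_one (abs_ne_zero.mpr h) (p - 2)
    rw [show p - 2 + 1 = p - 1 by ring] at this
    rw [this]

private lemma aux_abs_mul {p : ℝ} (hp : 1 < p) (x : ℝ) :
    abs (|x| ^ (p - 2) * x) = |x| ^ (p - 1) := by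
  rw [abs_mul, abs_of_nonneg (Real.rpow_nonneg (abs_nonneg x) _), aux_abs_rpow_mul hp]

private lemma aux_neg {p : ℝ} (hp : 1 < p) {x : ℝ} (hx : x < 0) :
    |x| ^ (p - 2) * x = -(|x| ^ (p - 1)) := by
  rw [← aux_abs_rpow_mul hp, abs_of_neg hx]; ring

private lemma aux_pos {p : ℝ} {x : ℝ} (hx : 0 < x) :
    |x| ^ (p - 2) * x = x ^ (p - 1) := by
  rw [abs_of_pos hx, ← Real.rpow_add_one hx.ne' (p - 2), show p - 2 + 1 = p - 1 by ring]

/-- Convergence of rescaled Nemytskii compositions (steps (40) and (60) of the paper):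
if `f` is continuous with `(p−1)`-growth and `f(x)/(|x|^{p−2}x) → η` as `x → ±∞`,
`tₙ → +∞`, `uₙ/tₙ → y` a.e. with an `L^p` dominating function `w`, then
`f(uₙ)/tₙ^{p−1} → η |y|^{p−2} y` in `L^{p'}(μ)`. -/
theorem rescaled_nemytskii_Lp'_convergence {Ω : Type*} [MeasurableSpace Ω]
    (μ : Measure Ω) [IsFiniteMeasure μ]
    (p p' η c : ℝ) (hp : 1 < p) (hp' : p' = p / (p - 1)) (hc : 0 < c)
    (f : ℝ → ℝ) (hf : Continuous f)
    (hgrowth : ∀ x : ℝ, |f x| ≤ c * (1 + |x| ^ (p - 1)))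
    (hlimtop : Tendsto (fun x : ℝ => f x / x ^ (p - 1)) atTop (nhds η))
    (hlimbot : Tendsto (fun x : ℝ => f x / (|x| ^ (p - 2) * x)) atBot (nhds η))
    (u : ℕ → Ω → ℝ) (hu : ∀ n, Measurable (u n))
    (t : ℕ → ℝ) (ht : ∀ n, 0 < t n) (htlim : Tendsto t atTop atTop)
    (y : Ω → ℝ) (hy : Measurable y)
    (w : Ω → ℝ) (hw : MemLp w (ENNReal.ofReal p) μ)
    (hconv : ∀ᵐ z ∂μ, Tendsto (fun n => u n z / t n) atTop (nhds (y z)))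
    (hdom : ∀ᵐ z ∂μ, ∀ n, |u n z / t n| ≤ w z) :
    Tendsto (fun n => ∫ z,
        |f (u n z) / (t n) ^ (p - 1) - η * (|y z| ^ (p - 2) * y z)| ^ p' ∂μ)
      atTop (nhds 0) := by
  have hp1 : (0:ℝ) < p - 1 := by linarith
  have hq : 0 < p' := by rw [hp']; positivity
  -- the dominating function
  set h : Ω → ℝ := fun z => c + (c + |η|) * |w z| ^ (p - 1) with hh
  have hMw : MemLp (fun z => |w z| ^ (p - 1)) (ENNReal.ofReal p') μ := by
    have := hw.norm_rpow_div (ENNReal.ofReal (p - 1))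
    simp only [ENNReal.toReal_ofReal hp1.le, Real.norm_eq_abs] at this
    rwa [← ENNReal.ofReal_div_of_pos hp1, ← hp'] at this
  have hMh : MemLp h (ENNReal.ofReal p') μ :=
    (memLp_const c).add (hMw.const_mul (c + |η|))
  have hbound_int : Integrable (fun z => ‖h z‖ ^ p') μ := by
    have := hMh.integrable_norm_rpow (by simp [hq, ENNReal.ofReal_eq_zero, not_le])
      ENNReal.ofReal_ne_top
    simpa [ENNReal.toReal_ofReal hq.le] using this
  -- a.e. |y| ≤ w
  have hyw : ∀ᵐ z ∂μ, |y z| ≤ w z := by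
    filter_upwards [hconv, hdom] with z hz hdz
    exact le_of_tendsto ((continuous_abs.tendsto _).comp hz) (Eventually.of_forall hdz)
  -- apply dominated convergence
  have key := tendsto_integral_filter_of_dominated_convergence
    (μ := μ) (l := atTop) (F := fun n z =>
      |f (u n z) / (t n) ^ (p - 1) - η * (|y z| ^ (p - 2) * y z)| ^ p')
    (f := fun _ => (0:ℝ)) (bound := fun z => ‖h z‖ ^ p')
    ?_ ?_ hbound_int ?_
  · simpa using key
  · -- measurability
    refine Eventually.of_forall fun n => ?_
    have : Measurable fun z =>
        |f (u n z) / (t n) ^ (p - 1) - η * (|y z| ^ (p - 2) * y z)| ^ p' := by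
      have h1 : Measurable fun z => f (u n z) := hf.measurable.comp (hu n)
      fun_prop
    exact this.aestronglyMeasurable
  · -- domination
    filter_upwards [htlim.eventually_ge_atTop 1] with n htn
    filter_upwards [hdom, hyw] with z hdz hyz
    have hwz : 0 ≤ w z := le_trans (abs_nonneg _) (hdz 0)
    have htpos : (0:ℝ) < (t n) ^ (p - 1) := Real.rpow_pos_of_pos (ht n) _
    have hX : |f (u n z) / (t n) ^ (p - 1) - η * (|y z| ^ (p - 2) * y z)| ≤ h z := by
      have hA : |f (u n z) / (t n) ^ (p - 1)| ≤ c * (1 + |w z| ^ (p - 1)) := by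
        rw [abs_div, abs_of_pos htpos]
        rw [div_le_iff₀ htpos]
        have e1 : |u n z| ^ (p - 1) = |u n z / t n| ^ (p - 1) * (t n) ^ (p - 1) := by
          rw [abs_div, abs_of_pos (ht n), Real.div_rpow (abs_nonneg _) (ht n).le,
            div_mul_cancel₀ _ htpos.ne']
        have h1 : (1:ℝ) ≤ (t n) ^ (p - 1) := Real.one_le_rpow htn hp1.le
        have h2 : |u n z / t n| ^ (p - 1) ≤ |w z| ^ (p - 1) := by
          apply Real.rpow_le_rpow (abs_nonneg _) _ hp1.le
          rw [abs_of_nonneg hwz]; exact hdz n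
        calc |f (u n z)| ≤ c * (1 + |u n z| ^ (p - 1)) := hgrowth _
          _ = c + c * (|u n z / t n| ^ (p - 1) * (t n) ^ (p - 1)) := by rw [e1]; ring
          _ ≤ c * (t n) ^ (p - 1) + c * (|w z| ^ (p - 1) * (t n) ^ (p - 1)) := by
              have h3 : c * (|u n z / t n| ^ (p - 1) * (t n) ^ (p - 1))
                  ≤ c * (|w z| ^ (p - 1) * (t n) ^ (p - 1)) :=
                mul_le_mul_of_nonneg_left
                  (mul_le_mul_of_nonneg_right h2 htpos.le) hc.le
              nlinarith
          _ = c * (1 + |w z| ^ (p - 1)) * (t n) ^ (p - 1) := by ring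
      have hB : |η * (|y z| ^ (p - 2) * y z)| ≤ |η| * |w z| ^ (p - 1) := by
        rw [abs_mul, aux_abs_mul hp]
        apply mul_le_mul_of_nonneg_left _ (abs_nonneg η)
        apply Real.rpow_le_rpow (abs_nonneg _) _ hp1.le
        rw [abs_of_nonneg hwz]; exact hyz
      calc |f (u n z) / (t n) ^ (p - 1) - η * (|y z| ^ (p - 2) * y z)|
          ≤ |f (u n z) / (t n) ^ (p - 1)| + |η * (|y z| ^ (p - 2) * y z)| := abs_sub _ _
        _ ≤ c * (1 + |w z| ^ (p - 1)) + |η| * |w z| ^ (p - 1) := add_le_add hA hB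
        _ = h z := by rw [hh]; ring
    rw [Real.norm_eq_abs,
      abs_of_nonneg (Real.rpow_nonneg (abs_nonneg _) _)]
    calc |f (u n z) / (t n) ^ (p - 1) - η * (|y z| ^ (p - 2) * y z)| ^ p'
        ≤ (h z) ^ p' := Real.rpow_le_rpow (abs_nonneg _) hX hq.le
      _ ≤ ‖h z‖ ^ p' := Real.rpow_le_rpow
          (le_trans (abs_nonneg _) hX) (le_abs_self _) hq.le
  · -- a.e. pointwise convergence
    filter_upwards [hconv] with z hz
    have hinner : Tendsto (fun n => f (u n z) / (t n) ^ (p - 1)) atTop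
        (nhds (η * (|y z| ^ (p - 2) * y z))) := by
      rcases lt_trichotomy (y z) 0 with hyz | hyz | hyz
      · -- y z < 0
        have hU : Tendsto (fun n => u n z) atTop atBot := by
          have hev : ∀ᶠ n in atTop, u n z ≤ (y z / 2) * t n := by
            filter_upwards [hz.eventually (eventually_le_nhds (by linarith : y z < y z / 2))]
              with n hn
            have : u n z / t n * t n ≤ y z / 2 * t n :=
              mul_le_mul_of_nonneg_right hn (ht n).le
            rwa [div_mul_cancel₀ _ (ht n).ne'] at this
          exact tendsto_atBot_mono' _ hev
            (htlim.const_mul_atTop_of_neg (by linarith : y z / 2 < 0))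
        have h1 : Tendsto (fun n => f (u n z) / (|u n z| ^ (p - 2) * u n z)) atTop (nhds η) :=
          hlimbot.comp hU
        have h2 : Tendsto (fun n => -(|u n z / t n| ^ (p - 1))) atTop
            (nhds (-(|y z| ^ (p - 1)))) := by
          apply Tendsto.neg
          exact ((Real.continuousAt_rpow_const _ _
            (Or.inl (abs_ne_zero.mpr hyz.ne))).tendsto.comp ((continuous_abs.tendsto _).comp hz))
        have hmul := h1.mul h2
        have heq : ∀ᶠ n in atTop,
            (f (u n z) / (|u n z| ^ (p - 2) * u n z)) * -(|u n z / t n| ^ (p - 1))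
              = f (u n z) / (t n) ^ (p - 1) := by
          filter_upwards [hU.eventually_lt_atBot 0] with n hn
          have habs : |u n z| ^ (p - 2) * u n z = -(|u n z| ^ (p - 1)) := aux_neg hp hn
          have hune : (0:ℝ) < |u n z| ^ (p - 1) :=
            Real.rpow_pos_of_pos (abs_pos.mpr hn.ne) _
          have htpos : (0:ℝ) < (t n) ^ (p - 1) := Real.rpow_pos_of_pos (ht n) _
          rw [habs, abs_div, abs_of_pos (ht n), Real.div_rpow (abs_nonneg _) (ht n).le]
          field_simp
        have := hmul.congr' heq
        rw [show η * (|y z| ^ (p - 2) * y z) = η * -(|y z| ^ (p - 1)) by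
          rw [aux_neg hp hyz]]
        exact this
      · -- y z = 0
        rw [hyz]
        simp only [mul_zero]
        rw [tendsto_zero_iff_norm_tendsto_zero]
        have hG : Tendsto (fun n => c * ((t n) ^ (p - 1))⁻¹ + c * |u n z / t n| ^ (p - 1))
            atTop (nhds 0) := by
          have g1 : Tendsto (fun n => ((t n) ^ (p - 1))⁻¹) atTop (nhds 0) :=
            ((tendsto_rpow_atTop hp1).comp htlim).inv_tendsto_atTop
          have g2 : Tendsto (fun n => |u n z / t n| ^ (p - 1)) atTop (nhds 0) := by
            have habs0 : Tendsto (fun n => |u n z / t n|) atTop (nhds 0) := by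
              have := (continuous_abs.tendsto (y z)).comp hz
              rw [hyz] at this
              simpa [Function.comp_def] using this
            have := (Real.continuousAt_rpow_const 0 (p - 1)
              (Or.inr hp1.le)).tendsto.comp habs0
            simpa [Function.comp_def, Real.zero_rpow hp1.ne'] using this
          have := (g1.const_mul c).add (g2.const_mul c)
          simpa using this
        refine squeeze_zero (fun n => norm_nonneg _) (fun n => ?_) hG
        have htpos : (0:ℝ) < (t n) ^ (p - 1) := Real.rpow_pos_of_pos (ht n) _
        rw [Real.norm_eq_abs, abs_div, abs_of_pos htpos, div_le_iff₀ htpos]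
        calc |f (u n z)| ≤ c * (1 + |u n z| ^ (p - 1)) := hgrowth _
          _ = (c * ((t n) ^ (p - 1))⁻¹ + c * (|u n z| ^ (p - 1) / (t n) ^ (p - 1)))
              * (t n) ^ (p - 1) := by
            field_simp
          _ = (c * ((t n) ^ (p - 1))⁻¹ + c * |u n z / t n| ^ (p - 1)) * (t n) ^ (p - 1) := by
            rw [abs_div, abs_of_pos (ht n), Real.div_rpow (abs_nonneg _) (ht n).le]
      · -- y z > 0
        have hU : Tendsto (fun n => u n z) atTop atTop := by
          have := aux_mul_atTop hyz hz htlim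
          apply this.congr
          intro n
          exact div_mul_cancel₀ _ (ht n).ne'
        have h1 : Tendsto (fun n => f (u n z) / (u n z) ^ (p - 1)) atTop (nhds η) :=
          hlimtop.comp hU
        have h2 : Tendsto (fun n => (u n z / t n) ^ (p - 1)) atTop
            (nhds ((y z) ^ (p - 1))) :=
          (Real.continuousAt_rpow_const _ _ (Or.inl hyz.ne')).tendsto.comp hz
        have hmul := h1.mul h2
        have heq : ∀ᶠ n in atTop,
            (f (u n z) / (u n z) ^ (p - 1)) * (u n z / t n) ^ (p - 1)
              = f (u n z) / (t n) ^ (p - 1) := by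
          filter_upwards [hU.eventually_gt_atTop 0] with n hn
          have hune : (0:ℝ) < (u n z) ^ (p - 1) := Real.rpow_pos_of_pos hn _
          have htpos : (0:ℝ) < (t n) ^ (p - 1) := Real.rpow_pos_of_pos (ht n) _
          rw [Real.div_rpow hn.le (ht n).le]
          field_simp
        have := hmul.congr' heq
        rw [show η * (|y z| ^ (p - 2) * y z) = η * (y z) ^ (p - 1) by
          rw [aux_pos hyz]]
        exact this
    have hX : Tendsto (fun n =>
        f (u n z) / (t n) ^ (p - 1) - η * (|y z| ^ (p - 2) * y z)) atTop (nhds 0) := by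
      have := hinner.sub_const (η * (|y z| ^ (p - 2) * y z))
      simpa using this
    have habs : Tendsto (fun n =>
        |f (u n z) / (t n) ^ (p - 1) - η * (|y z| ^ (p - 2) * y z)|) atTop (nhds 0) := by
      have := (continuous_abs.tendsto _).comp hX
      simpa [Function.comp_def] using this
    have := (Real.continuousAt_rpow_const 0 p' (Or.inr hq.le)).tendsto.comp habs
    simpa [Function.comp_def, Real.zero_rpow hq.ne'] using this
end
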